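/- Let H^s_γ for s ∈ Z^k_{≥0} denote polynomials J_γ^s(z) = Σ_{t ∈ Z^k} [(t+1)⋯(t+s) / (γ+tv)!] z^{γ+tv} (multi-index notation, terms with any negative exponent coordinate vanish), where v = (v¹,...,v^k) is a fixed tuple of lattice vectors and (t+1)⋯(t+s) = Π_α (t_α+1)⋯(t_α+s_α). Let O_α = ∂²/∂z^{v^α_+} - ∂²/∂z^{v^α_-} be the GKZ operator associated to v^α = v^α_+ - v^α_- (each of v^α_±, a sum of two distinct unit vectors). Then O_α J_γ^s = s_α · J_{γ - v^α_+}^{s - e_α}. -/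

import Mathlib

open MvPolynomial

/-- The exponent vector `γ + t·v = γ + t₁v¹ + … + t_k v^k`. -/
def expVec {N k : ℕ} (v : Fin k → Fin N → ℤ) (γ : Fin N → ℤ) (t : Fin k → ℤ) :
    Fin N → ℤ :=
  fun i => γ i + ∑ α, t α * v α i

/-- The Horn-type polynomial
`J_γ^s(z) = Σ_{t ∈ ℤ^k} (t+1)⋯(t+s) z^{γ+tv}/(γ+tv)!` (multi-index notation; terms
whose exponent vector has a negative coordinate vanish). The hypothesis `hfin` says
that only finitely many `t` give exponent vectors with all coordinates nonnegative,
so the sum is finite. -/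
noncomputable def Jpoly {N k : ℕ} (v : Fin k → Fin N → ℤ)
    (hfin : ∀ γ : Fin N → ℤ, {t : Fin k → ℤ | ∀ i, 0 ≤ expVec v γ t i}.Finite)
    (γ : Fin N → ℤ) (s : Fin k → ℕ) : MvPolynomial (Fin N) ℚ :=
  ∑ t ∈ (hfin γ).toFinset,
    ((∏ α, ∏ m ∈ Finset.range (s α), ((t α : ℚ) + m + 1)) *
        ((∏ i, (expVec v γ t i).toNat.factorial : ℕ) : ℚ)⁻¹) •
      monomial (Finsupp.equivFunOnFinite.symm fun i => (expVec v γ t i).toNat) (1 : ℚ)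

/-- For lattice vectors `v^α = v^α_+ - v^α_-` with `v^α_+ = e_{Aα} + e_{Bα}` and
`v^α_- = e_{Cα} + e_{Dα}` (sums of two distinct unit vectors), the GKZ operator
`O_α = ∂²/∂z^{v^α_+} - ∂²/∂z^{v^α_-}` acts on the Horn-type polynomials by
`O_α J_γ^s = s_α · J_{γ - v^α_+}^{s - e_α}`. -/
lemma aux_prod_pair {N : ℕ} {X Y : Fin N} (hXY : X ≠ Y) (a b : ℕ) :
    (∏ i, (if i = X then a else if i = Y then b else 1)) = a * b := by
  rw [← Finset.mul_prod_erase Finset.univ _ (Finset.mem_univ X),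
    ← Finset.mul_prod_erase _ _ (Finset.mem_erase.2 ⟨hXY.symm, Finset.mem_univ Y⟩),
    if_pos rfl, if_neg hXY.symm, if_pos rfl, Finset.prod_eq_one, mul_one]
  intro i hi
  simp only [Finset.mem_erase] at hi
  rw [if_neg hi.2.1, if_neg hi.1]

lemma aux_factorial {N : ℕ} {X Y : Fin N} (hXY : X ≠ Y) (f g : Fin N → ℤ)
    (hg : ∀ i, 0 ≤ g i)
    (hfg : ∀ i, f i = g i + ((if i = X then 1 else 0) + (if i = Y then 1 else 0))) :
    (∏ i, (f i).toNat.factorial) =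
      ((f X).toNat * (f Y).toNat) * ∏ i, (g i).toNat.factorial := by
  have key : ∀ i, (f i).toNat.factorial =
      (if i = X then (f X).toNat else if i = Y then (f Y).toNat else 1) *
        (g i).toNat.factorial := by
    intro i
    by_cases hx : i = X
    · subst hx
      have h1 : (f i).toNat = (g i).toNat + 1 := by
        have h := hfg i; have := hg i
        rw [if_pos rfl, if_neg hXY] at h; omega
      rw [if_pos rfl, h1, Nat.factorial_succ, ← h1]
    · by_cases hy : i = Y
      · subst hy
        have h1 : (f i).toNat = (g i).toNat + 1 := by
          have h := hfg i; have := hg i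
          rw [if_pos rfl, if_neg hx] at h; omega
        rw [if_neg hx, if_pos rfl, h1, Nat.factorial_succ, ← h1]
      · have h1 : (f i).toNat = (g i).toNat := by
          have h := hfg i; have := hg i
          rw [if_neg hx, if_neg hy] at h; omega
        rw [if_neg hx, if_neg hy, h1, one_mul]
  rw [Finset.prod_congr rfl fun i _ => key i, Finset.prod_mul_distrib, aux_prod_pair hXY]

lemma aux_qdiff (x : ℚ) (n : ℕ) :
    (∏ m ∈ Finset.range n, (x + m + 1)) - ∏ m ∈ Finset.range n, (x - 1 + m + 1) =
      n * ∏ m ∈ Finset.range (n - 1), (x + m + 1) := by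
  cases n with
  | zero => simp
  | succ n =>
    rw [Finset.prod_range_succ, Finset.prod_range_succ']
    have h : ∀ m ∈ Finset.range n, (x - 1 + ((m : ℕ) + 1 : ℕ) + 1) = x + m + 1 := by
      intro m _; push_cast; ring
    rw [Finset.prod_congr rfl h]
    simp only [Nat.add_sub_cancel, Nat.cast_zero, Nat.cast_succ]
    ring

theorem stmt_17 {N k : ℕ} (v : Fin k → Fin N → ℤ) (A B C D : Fin k → Fin N)
    (hAB : ∀ α, A α ≠ B α) (hCD : ∀ α, C α ≠ D α)
    (hv : ∀ α i, v α i =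
      ((if i = A α then 1 else 0) + (if i = B α then 1 else 0) -
        (if i = C α then 1 else 0) - (if i = D α then 1 else 0)))
    (hfin : ∀ γ : Fin N → ℤ, {t : Fin k → ℤ | ∀ i, 0 ≤ expVec v γ t i}.Finite)
    (γ : Fin N → ℤ) (s : Fin k → ℕ) (α : Fin k) :
    pderiv (A α) (pderiv (B α) (Jpoly v hfin γ s)) -
        pderiv (C α) (pderiv (D α) (Jpoly v hfin γ s)) =
      (s α : ℚ) •
        Jpoly v hfin
          (fun i => γ i - ((if i = A α then 1 else 0) + (if i = B α then 1 else 0)))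
          (Function.update s α (s α - 1)) := by
  classical
  have hAB' := hAB α
  have hCD' := hCD α
  set γ' : Fin N → ℤ :=
    fun i => γ i - ((if i = A α then 1 else 0) + (if i = B α then 1 else 0)) with hγ'
  set s' : Fin k → ℕ := Function.update s α (s α - 1) with hs'
  set eα : Fin k → ℤ := fun β => if β = α then 1 else 0 with heα
  -- basic expVec relations
  have hEq1 : ∀ (t : Fin k → ℤ) (i : Fin N), expVec v γ t i =
      expVec v γ' t i + ((if i = A α then 1 else 0) + (if i = B α then 1 else 0)) := by
    intro t i; simp only [expVec, hγ']; ring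
  have hsumv : ∀ (t : Fin k → ℤ) (i : Fin N),
      (∑ β, (t β + eα β) * v β i) = (∑ β, t β * v β i) + v α i := by
    intro t i
    simp only [heα, add_mul, ite_mul, one_mul, zero_mul, Finset.sum_add_distrib,
      Finset.sum_ite_eq' Finset.univ, Finset.mem_univ, if_pos]
  have hEq2 : ∀ (t : Fin k → ℤ) (i : Fin N), expVec v γ' (t + eα) i =
      expVec v γ t i - (if i = C α then 1 else 0) - (if i = D α then 1 else 0) := by
    intro t i
    simp only [expVec, Pi.add_apply, hγ']
    rw [hsumv t i, hv α i]; ring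
  have hEq2' : ∀ (t : Fin k → ℤ) (i : Fin N), expVec v γ (t - eα) i =
      expVec v γ' t i + ((if i = C α then 1 else 0) + (if i = D α then 1 else 0)) := by
    intro t i
    have h := hEq2 (t - eα) i
    have hc : t - eα + eα = t := by ring
    rw [hc] at h
    omega
  have hmem : ∀ (δ : Fin N → ℤ) (t : Fin k → ℤ),
      t ∈ (hfin δ).toFinset ↔ ∀ i, 0 ≤ expVec v δ t i := by
    intro δ t; rw [Set.Finite.mem_toFinset]; rfl
  have hTsub : (hfin γ').toFinset ⊆ (hfin γ).toFinset := by
    intro t ht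
    rw [hmem] at ht ⊢
    intro i
    have h1 := ht i
    have h2 := hEq1 t i
    have h3 : (0:ℤ) ≤ if i = A α then 1 else 0 := by split <;> norm_num
    have h4 : (0:ℤ) ≤ if i = B α then 1 else 0 := by split <;> norm_num
    omega
  -- the general second-derivative formula
  have hJ : ∀ X Y : Fin N, X ≠ Y → pderiv X (pderiv Y (Jpoly v hfin γ s)) =
      ∑ t ∈ (hfin γ).toFinset,
        (monomial ((Finsupp.equivFunOnFinite.symm fun i => (expVec v γ t i).toNat)
            - Finsupp.single Y 1 - Finsupp.single X 1))
          (((∏ β, ∏ m ∈ Finset.range (s β), ((t β : ℚ) + m + 1)) *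
            ((∏ i, (expVec v γ t i).toNat.factorial : ℕ) : ℚ)⁻¹) *
            (((expVec v γ t Y).toNat : ℚ) * ((expVec v γ t X).toNat : ℚ))) := by
    intro X Y hXY
    simp only [Jpoly, smul_monomial, smul_eq_mul, mul_one, map_sum, pderiv_monomial]
    refine Finset.sum_congr rfl fun t ht => ?_
    congr 1
    simp only [Finsupp.tsub_apply, Finsupp.single_eq_of_ne hXY,
      Finsupp.coe_equivFunOnFinite_symm, tsub_zero]
    ring
  -- the AB part
  have hAB2 : pderiv (A α) (pderiv (B α) (Jpoly v hfin γ s)) =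
      ∑ t ∈ (hfin γ').toFinset,
        (monomial (Finsupp.equivFunOnFinite.symm fun i => (expVec v γ' t i).toNat))
          ((∏ β, ∏ m ∈ Finset.range (s β), ((t β : ℚ) + m + 1)) *
            ((∏ i, (expVec v γ' t i).toNat.factorial : ℕ) : ℚ)⁻¹) := by
    rw [hJ _ _ hAB']
    refine ((Finset.sum_subset hTsub ?_).symm).trans (Finset.sum_congr rfl ?_)
    · intro t ht hnt
      rw [hmem] at ht hnt
      push_neg at hnt
      obtain ⟨i, hi⟩ := hnt
      have h2 := hEq1 t i
      have h5 := ht i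
      have h0 : (expVec v γ t (A α)).toNat = 0 ∨ (expVec v γ t (B α)).toNat = 0 := by
        by_cases hxa : i = A α
        · subst hxa
          rw [if_pos rfl, if_neg hAB'] at h2
          omega
        · by_cases hxb : i = B α
          · subst hxb
            rw [if_neg hxa, if_pos rfl] at h2
            omega
          · rw [if_neg hxa, if_neg hxb] at h2
            omega
      rcases h0 with h | h <;> rw [h] <;> simp
    · intro t ht
      rw [hmem] at ht
      have key := aux_factorial hAB' (expVec v γ t) (expVec v γ' t) ht (hEq1 t)
      have hA1 : (expVec v γ t (A α)).toNat ≠ 0 := by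
        have h2 := hEq1 t (A α); rw [if_pos rfl, if_neg hAB'] at h2
        have := ht (A α); omega
      have hB1 : (expVec v γ t (B α)).toNat ≠ 0 := by
        have h2 := hEq1 t (B α)
        rw [if_neg (fun h => hAB' h.symm), if_pos rfl] at h2
        have := ht (B α); omega
      have hfac : ((∏ i, (expVec v γ' t i).toNat.factorial : ℕ) : ℚ) ≠ 0 :=
        Nat.cast_ne_zero.mpr
          (Finset.prod_ne_zero_iff.mpr fun i _ => (Nat.factorial_pos _).ne')
      have hexp : (Finsupp.equivFunOnFinite.symm fun i => (expVec v γ t i).toNat)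
            - Finsupp.single (B α) 1 - Finsupp.single (A α) 1 =
          Finsupp.equivFunOnFinite.symm fun i => (expVec v γ' t i).toNat := by
        ext i
        simp only [Finsupp.tsub_apply, Finsupp.single_apply,
          Finsupp.coe_equivFunOnFinite_symm]
        have h2 := hEq1 t i
        have h3 := ht i
        by_cases hxa : i = A α
        · subst hxa
          rw [if_pos rfl, if_neg hAB'] at h2
          rw [if_neg (fun h : B α = A α => hAB' h.symm), if_pos rfl]
          omega
        · by_cases hxb : i = B α
          · subst hxb
            rw [if_neg hxa, if_pos rfl] at h2
            rw [if_pos rfl, if_neg (fun h : A α = B α => hxa h.symm)]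
            omega
          · rw [if_neg hxa, if_neg hxb] at h2
            rw [if_neg (fun h : B α = i => hxb h.symm),
              if_neg (fun h : A α = i => hxa h.symm)]
            omega
      rw [hexp]
      congr 1
      · rw [key]
        push_cast
        have hA1' : ((expVec v γ t (A α)).toNat : ℚ) ≠ 0 := Nat.cast_ne_zero.mpr hA1
        have hB1' : ((expVec v γ t (B α)).toNat : ℚ) ≠ 0 := Nat.cast_ne_zero.mpr hB1
        field_simp
  -- the CD part
  have hCD2 : pderiv (C α) (pderiv (D α) (Jpoly v hfin γ s)) =
      ∑ t ∈ (hfin γ').toFinset,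
        (monomial (Finsupp.equivFunOnFinite.symm fun i => (expVec v γ' t i).toNat))
          ((∏ β, ∏ m ∈ Finset.range (s β), (((t - eα) β : ℚ) + m + 1)) *
            ((∏ i, (expVec v γ' t i).toNat.factorial : ℕ) : ℚ)⁻¹) := by
    rw [hJ _ _ hCD']
    refine ((Finset.sum_filter_of_ne (p := fun t => t + eα ∈ (hfin γ').toFinset) ?_).symm).trans
      (Finset.sum_nbij' (fun t => t + eα) (fun t => t - eα) ?_ ?_ ?_ ?_ ?_)
    · -- nonzero terms satisfy the filter predicate
      intro t ht hne
      by_contra hnt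
      apply hne
      rw [hmem] at ht
      rw [hmem] at hnt
      push_neg at hnt
      obtain ⟨i, hi⟩ := hnt
      rw [hEq2 t i] at hi
      have h5 := ht i
      have h0 : (expVec v γ t (C α)).toNat = 0 ∨ (expVec v γ t (D α)).toNat = 0 := by
        by_cases hxc : i = C α
        · subst hxc
          rw [if_pos rfl, if_neg hCD'] at hi
          omega
        · by_cases hxd : i = D α
          · subst hxd
            rw [if_neg hxc, if_pos rfl] at hi
            omega
          · rw [if_neg hxc, if_neg hxd] at hi
            omega
      rcases h0 with h | h <;> rw [h] <;> simp
    · intro t ht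
      exact (Finset.mem_filter.1 ht).2
    · intro t' ht'
      rw [Finset.mem_filter]
      constructor
      · rw [hmem]
        intro i
        show (0:ℤ) ≤ expVec v γ (t' - eα) i
        have h1 := hEq2' t' i
        have h2 := (hmem γ' t').1 ht' i
        have h3 : (0:ℤ) ≤ if i = C α then 1 else 0 := by split <;> norm_num
        have h4 : (0:ℤ) ≤ if i = D α then 1 else 0 := by split <;> norm_num
        omega
      · have hc : t' - eα + eα = t' := by ring
        rw [hc]
        exact ht'
    · intro t _
      show t + eα - eα = t
      ring
    · intro t' _
      show t' - eα + eα = t'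
      ring
    · intro t ht
      rw [Finset.mem_filter, hmem, hmem] at ht
      obtain ⟨ht1, ht2⟩ := ht
      have hc : t + eα - eα = t := by ring
      rw [hc]
      have hfg : ∀ i, expVec v γ t i = expVec v γ' (t + eα) i +
          ((if i = C α then 1 else 0) + (if i = D α then 1 else 0)) := by
        intro i; have := hEq2 t i; omega
      have key := aux_factorial hCD' (expVec v γ t) (expVec v γ' (t + eα)) ht2 hfg
      have hC1 : (expVec v γ t (C α)).toNat ≠ 0 := by
        have h2 := hfg (C α); rw [if_pos rfl, if_neg hCD'] at h2
        have := ht2 (C α); omega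
      have hD1 : (expVec v γ t (D α)).toNat ≠ 0 := by
        have h2 := hfg (D α)
        rw [if_neg (fun h => hCD' h.symm), if_pos rfl] at h2
        have := ht2 (D α); omega
      have hexp : (Finsupp.equivFunOnFinite.symm fun i => (expVec v γ t i).toNat)
            - Finsupp.single (D α) 1 - Finsupp.single (C α) 1 =
          Finsupp.equivFunOnFinite.symm fun i => (expVec v γ' (t + eα) i).toNat := by
        ext i
        simp only [Finsupp.tsub_apply, Finsupp.single_apply,
          Finsupp.coe_equivFunOnFinite_symm]
        have h2 := hfg i
        have h3 := ht1 i
        by_cases hxc : i = C α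
        · subst hxc
          rw [if_pos rfl, if_neg hCD'] at h2
          rw [if_neg (fun h : D α = C α => hCD' h.symm), if_pos rfl]
          omega
        · by_cases hxd : i = D α
          · subst hxd
            rw [if_neg hxc, if_pos rfl] at h2
            rw [if_pos rfl, if_neg (fun h : C α = D α => hxc h.symm)]
            omega
          · rw [if_neg hxc, if_neg hxd] at h2
            rw [if_neg (fun h : D α = i => hxd h.symm),
              if_neg (fun h : C α = i => hxc h.symm)]
            omega
      rw [hexp]
      congr 1
      · rw [key]
        push_cast
        have hC1' : ((expVec v γ t (C α)).toNat : ℚ) ≠ 0 := Nat.cast_ne_zero.mpr hC1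
        have hD1' : ((expVec v γ t (D α)).toNat : ℚ) ≠ 0 := Nat.cast_ne_zero.mpr hD1
        have hfac : ((∏ i, (expVec v γ' (t + eα) i).toNat.factorial : ℕ) : ℚ) ≠ 0 :=
          Nat.cast_ne_zero.mpr
            (Finset.prod_ne_zero_iff.mpr fun i _ => (Nat.factorial_pos _).ne')
        field_simp
  -- key polynomial identity
  have hp : ∀ t : Fin k → ℤ,
      (∏ β, ∏ m ∈ Finset.range (s β), ((t β : ℚ) + m + 1)) -
        (∏ β, ∏ m ∈ Finset.range (s β), (((t - eα) β : ℚ) + m + 1)) =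
      (s α : ℚ) * ∏ β, ∏ m ∈ Finset.range (s' β), ((t β : ℚ) + m + 1) := by
    intro t
    rw [← Finset.mul_prod_erase Finset.univ
        (fun β => ∏ m ∈ Finset.range (s β), ((t β : ℚ) + m + 1)) (Finset.mem_univ α),
      ← Finset.mul_prod_erase Finset.univ
        (fun β => ∏ m ∈ Finset.range (s β), (((t - eα) β : ℚ) + m + 1)) (Finset.mem_univ α),
      ← Finset.mul_prod_erase Finset.univ
        (fun β => ∏ m ∈ Finset.range (s' β), ((t β : ℚ) + m + 1)) (Finset.mem_univ α)]
    have hR2 : ∀ β ∈ Finset.univ.erase α,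
        (∏ m ∈ Finset.range (s β), (((t - eα) β : ℚ) + m + 1)) =
          ∏ m ∈ Finset.range (s β), ((t β : ℚ) + m + 1) := by
      intro β hβ
      have hne : β ≠ α := (Finset.mem_erase.1 hβ).1
      have : (t - eα) β = t β := by simp [heα, Pi.sub_apply, if_neg hne]
      rw [this]
    have hR3 : ∀ β ∈ Finset.univ.erase α,
        (∏ m ∈ Finset.range (s' β), ((t β : ℚ) + m + 1)) =
          ∏ m ∈ Finset.range (s β), ((t β : ℚ) + m + 1) := by
      intro β hβ
      rw [hs', Function.update_of_ne (Finset.mem_erase.1 hβ).1]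
    rw [Finset.prod_congr rfl hR2, Finset.prod_congr rfl hR3]
    have hα2 : (∏ m ∈ Finset.range (s α), (((t - eα) α : ℚ) + m + 1)) =
        ∏ m ∈ Finset.range (s α), ((t α : ℚ) - 1 + m + 1) := by
      refine Finset.prod_congr rfl fun m _ => ?_
      have : (t - eα) α = t α - 1 := by simp [heα, Pi.sub_apply]
      rw [this]
      push_cast
      ring
    have hα3 : s' α = s α - 1 := by rw [hs', Function.update_self]
    rw [hα2, hα3]
    linear_combination
      (∏ β ∈ Finset.univ.erase α, ∏ m ∈ Finset.range (s β), ((t β : ℚ) + m + 1)) *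
        aux_qdiff (t α : ℚ) (s α)
  -- assemble
  rw [hAB2, hCD2, Jpoly, Finset.smul_sum, ← Finset.sum_sub_distrib]
  refine Finset.sum_congr rfl fun t ht => ?_
  rw [← map_sub, smul_smul, smul_monomial, smul_eq_mul, mul_one]
  congr 1
  have h := hp t
  linear_combination
    (((∏ i, (expVec v γ' t i).toNat.factorial : ℕ) : ℚ)⁻¹) * h
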